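/- Let w : ℝ → ℝ be twice differentiable and define u(t,x,y) = x·w(t). Then u satisfies the ZK equation u_{xt} − (u u_x)_x − u_{yy} = 0 if and only if w satisfies the Riccati equation w(t)² − w'(t) = 0 for all t. -/

import Mathlib

/-- The Zabolotskaya–Khokhlov equation `u_{xt} − (u u_x)_x − u_{yy} = 0`
at the point `(t,x,y)`. -/
noncomputable def ZK (u : ℝ → ℝ → ℝ → ℝ) (t x y : ℝ) : Prop :=
  deriv (fun x' => deriv (fun t' => u t' x' y) t) x
    - deriv (fun x' => u t x' y * deriv (fun x'' => u t x'' y) x') x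
    - deriv (fun y' => deriv (fun y'' => u t x y'') y') y = 0

theorem reduction_L211 (w : ℝ → ℝ) (hw : ContDiff ℝ 2 w) :
    (∀ t x y : ℝ, ZK (fun t x _ => x * w t) t x y) ↔
      (∀ t : ℝ, (w t) ^ 2 - deriv w t = 0) := by
  have hwd : Differentiable ℝ w := hw.differentiable (by norm_num)
  have key : ∀ t x y : ℝ, ZK (fun t x _ => x * w t) t x y ↔
      deriv w t - w t ^ 2 = 0 := by
    intro t x y
    unfold ZK
    have e1 : deriv (fun x' : ℝ => deriv (fun t' => x' * w t') t) x = deriv w t := by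
      have h : (fun x' : ℝ => deriv (fun t' => x' * w t') t)
          = fun x' : ℝ => x' * deriv w t := by
        funext x'
        rw [deriv_const_mul _ (hwd t)]
      rw [h, deriv_mul_const differentiableAt_id]
      simp
    have e2 : deriv (fun x' : ℝ => x' * w t * deriv (fun x'' : ℝ => x'' * w t) x') x
        = w t ^ 2 := by
      have h : (fun x' : ℝ => x' * w t * deriv (fun x'' : ℝ => x'' * w t) x')
          = fun x' : ℝ => x' * (w t * w t) := by
        funext x'
        rw [deriv_mul_const differentiableAt_id]
        simp [mul_assoc]
      rw [h, deriv_mul_const differentiableAt_id]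
      simp [pow_two]
    have e3 : deriv (fun y' : ℝ => deriv (fun _ : ℝ => x * w t) y') y = 0 := by
      simp
    rw [e1, e2, e3]
    constructor <;> intro h <;> linarith
  constructor
  · intro h t
    have := (key t 0 0).mp (h t 0 0)
    linarith
  · intro h t x y
    exact (key t x y).mpr (by have := h t; linarith)
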